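/- For odd n ≥ 4 and integer λ with 1 ≤ λ+4 ≤ n, for every ℓ ∈ [n], the row sums of P_{n,λ} and Q_{n,λ} are opposite: ∑_{j=1}^n P_{n,λ}(ℓ,j) = -∑_{j=1}^n Q_{n,λ}(ℓ,j), and likewise the column sums: ∑_{i=1}^n P_{n,λ}(i,ℓ) = -∑_{i=1}^n Q_{n,λ}(i,ℓ). -/
import Mathlib


open Finset Matrix

/-- The vector `P_{n,λ}`; the vertex `v : Fin n × Fin n` has 1-based coordinates
`(i, j) = (v.1 + 1, v.2 + 1)`, `i ⊖ j = |i - j|`, `i ⊕ j = |i + j - (n+1)|`, and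
`k = (λ + 4) - (n-1)/2`. -/
noncomputable def Pvec (n : ℕ) (lam : ℤ) (v : Fin n × Fin n) : ℝ :=
  let i : ℤ := (v.1 : ℤ) + 1
  let j : ℤ := (v.2 : ℤ) + 1
  let k : ℤ := (lam + 4) - ((n : ℤ) - 1) / 2
  if |i - j| = (n : ℤ) - (lam + 4) then (k : ℝ)
  else if |i - j| < (n : ℤ) - (lam + 4) ∧ |i + j - ((n : ℤ) + 1)| < lam + 4 ∧
      |i - j| % 2 = ((n : ℤ) - (lam + 4)) % 2 then 1
  else 0

/-- The vector `Q_{n,λ}`. -/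
noncomputable def Qvec (n : ℕ) (lam : ℤ) (v : Fin n × Fin n) : ℝ :=
  let i : ℤ := (v.1 : ℤ) + 1
  let j : ℤ := (v.2 : ℤ) + 1
  let k : ℤ := (lam + 4) - ((n : ℤ) - 1) / 2
  if |i + j - ((n : ℤ) + 1)| = (n : ℤ) - (lam + 4) then (-k : ℝ)
  else if |i + j - ((n : ℤ) + 1)| < (n : ℤ) - (lam + 4) ∧ |i - j| < lam + 4 ∧
      |i + j - ((n : ℤ) + 1)| % 2 = ((n : ℤ) - (lam + 4)) % 2 then -1
  else 0

/-- The vector `E_{n,λ} = P_{n,λ} + Q_{n,λ}`. -/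
noncomputable def Evec (n : ℕ) (lam : ℤ) (v : Fin n × Fin n) : ℝ :=
  Pvec n lam v + Qvec n lam v

lemma P_symm (n : ℕ) (lam : ℤ) (a b : Fin n) :
    Pvec n lam (a, b) = Pvec n lam (b, a) := by
  simp only [Pvec]
  rw [abs_sub_comm ((a:ℤ)+1) ((b:ℤ)+1), add_comm ((a:ℤ)+1) ((b:ℤ)+1)]

lemma Q_symm (n : ℕ) (lam : ℤ) (a b : Fin n) :
    Qvec n lam (a, b) = Qvec n lam (b, a) := by
  simp only [Qvec]
  rw [abs_sub_comm ((a:ℤ)+1) ((b:ℤ)+1), add_comm ((a:ℤ)+1) ((b:ℤ)+1)]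

lemma Q_eq_neg_P (n : ℕ) (lam : ℤ) (a b : Fin n) :
    Qvec n lam (a, b) = - Pvec n lam (a, b.rev) := by
  have hb : ((b.rev : ℕ) : ℤ) = (n : ℤ) - 1 - (b : ℤ) := by
    have h1 : (b.rev : ℕ) = n - ((b : ℕ) + 1) := Fin.val_rev b
    have h2 : (b : ℕ) < n := b.isLt
    omega
  simp only [Qvec, Pvec]
  have e1 : ((a:ℤ)+1) - (((b.rev : Fin n):ℤ)+1) = ((a:ℤ)+1) + ((b:ℤ)+1) - ((n:ℤ)+1) := by
    rw [hb]; ring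
  have e2 : ((a:ℤ)+1) + (((b.rev : Fin n):ℤ)+1) - ((n:ℤ)+1) = ((a:ℤ)+1) - ((b:ℤ)+1) := by
    rw [hb]; ring
  rw [e1, e2]
  split_ifs <;> push_cast <;> ring

theorem stmt18' (n : ℕ) (lam : ℤ) (l : Fin n) :
    (∑ j : Fin n, Pvec n lam (l, j)) = -(∑ j : Fin n, Qvec n lam (l, j)) ∧
    (∑ i : Fin n, Pvec n lam (i, l)) = -(∑ i : Fin n, Qvec n lam (i, l)) := by
  have key : (∑ j : Fin n, Pvec n lam (l, j)) = -(∑ j : Fin n, Qvec n lam (l, j)) := by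
    have : (∑ j : Fin n, Qvec n lam (l, j)) = ∑ j : Fin n, - Pvec n lam (l, j.rev) := by
      exact Finset.sum_congr rfl fun j _ => Q_eq_neg_P n lam l j
    rw [this]
    simp only [Finset.sum_neg_distrib, neg_neg]
    exact (Fintype.sum_bijective Fin.rev Fin.rev_bijective _ _ (fun j => rfl)).symm
  refine ⟨key, ?_⟩
  simpa [P_symm n lam _ l, Q_symm n lam _ l] using key

/-- for each `ℓ`, the `ℓ`-th row sums of `P_{n,λ}` and `Q_{n,λ}` are
opposite, and likewise the column sums. -/
theorem stmt18 (n : ℕ) (hn : 4 ≤ n) (hodd : Odd n) (lam : ℤ)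
    (h1 : 1 ≤ lam + 4) (h2 : lam + 4 ≤ (n : ℤ)) (l : Fin n) :
    (∑ j : Fin n, Pvec n lam (l, j)) = -(∑ j : Fin n, Qvec n lam (l, j)) ∧
    (∑ i : Fin n, Pvec n lam (i, l)) = -(∑ i : Fin n, Qvec n lam (i, l)) := by
  exact stmt18' n lam l
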